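/- arXiv:1908.03263 — 3 statements merged into one kernel-verified Lean document; each statement's English description precedes it below -/
import Mathlib

section
/- Let (Ω₁, μ), (Ω₂, ν), (Ω₃, ρ) be probability spaces, let f : Ω₁ × Ω₂ × Ω₃ → ℝ be square-integrable with respect to μ × ν × ρ, and let g : Ω₁ × Ω₂ → ℝ be square-integrable with respect to μ × ν. Define the difference estimator F(x,y,z) = f(x,y,z) − g(x,y) + ∫ g(x,y') dν(y'). Then: (i) ∫ F d(μ×ν×ρ) = ∫ f d(μ×ν×ρ); and (ii) Var_{μ×ν×ρ}[F] = Var_{x∼μ}[∫∫ f(x,y,z) dν(y) dρ(z)] + ∫ Var_{y∼ν}[∫ f(x,y,z) dρ(z) − g(x,y)] dμ(x) + ∫∫ Var_{z∼ρ}[f(x,y,z)] dμ(x) dν(y). In particular, compared with the corresponding decomposition of Var[f], only the middle component is changed by the control variate g, while the first and third components are unaffected. -/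
open MeasureTheory ProbabilityTheory

set_option maxHeartbeats 1000000

section Aux

variable {α β : Type*} [MeasurableSpace α] [MeasurableSpace β]

lemma variance_congr' {μ : Measure α} {X Y : α → ℝ} (h : X =ᵐ[μ] Y) :
    variance X μ = variance Y μ := by
  have hi : ∫ a, X a ∂μ = ∫ a, Y a ∂μ := integral_congr_ae h
  unfold ProbabilityTheory.variance ProbabilityTheory.evariance
  congr 1
  apply lintegral_congr_ae
  filter_upwards [h] with ω hω
  rw [hω, hi]

lemma variance_add_const' {μ : Measure α} [IsProbabilityMeasure μ] {X : α → ℝ}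
    (hX : Integrable X μ) (c : ℝ) :
    variance (fun ω => X ω + c) μ = variance X μ := by
  have hi : ∫ a, (X a + c) ∂μ = (∫ a, X a ∂μ) + c := by
    rw [integral_add hX (integrable_const c), integral_const]; simp
  unfold ProbabilityTheory.variance ProbabilityTheory.evariance
  have hpt : ∀ ω, X ω + c - ((∫ a, X a ∂μ) + c) = X ω - ∫ a, X a ∂μ := fun ω => by ring
  congr 1
  apply lintegral_congr
  intro ω
  rw [hi, hpt]

variable {μ : Measure α} {ν : Measure β} [IsProbabilityMeasure μ] [IsProbabilityMeasure ν]

lemma sections_memLp {h : α × β → ℝ} (hL : MemLp h 2 (μ.prod ν)) :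
    ∀ᵐ x ∂μ, MemLp (fun y => h (x, y)) 2 ν := by
  filter_upwards [hL.1.prodMk_left, hL.integrable_sq.prod_right_ae] with x h1 h2
  refine (memLp_two_iff_integrable_sq h1).2 ?_
  simpa [Pi.pow_apply] using h2

lemma mean_memLp {h : α × β → ℝ} (hL : MemLp h 2 (μ.prod ν)) :
    MemLp (fun x => ∫ y, h (x, y) ∂ν) 2 μ := by
  have hsm : AEStronglyMeasurable (fun x => ∫ y, h (x, y) ∂ν) μ := hL.1.integral_prod_right'
  refine (memLp_two_iff_integrable_sq hsm).2 ?_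
  have hint : Integrable (fun x => ∫ y, h (x, y) ^ 2 ∂ν) μ := hL.integrable_sq.integral_prod_left
  refine hint.mono' ((hsm.mul hsm).congr (ae_of_all _ fun x => (pow_two _).symm)) ?_
  filter_upwards [sections_memLp hL] with x hx
  have hv := variance_nonneg (fun y => h (x, y)) ν
  rw [variance_eq_sub hx] at hv
  simp only [Pi.pow_apply] at hv
  rw [Real.norm_eq_abs, abs_of_nonneg (sq_nonneg _)]
  linarith

lemma variance_sections_integrable {h : α × β → ℝ} (hL : MemLp h 2 (μ.prod ν)) :
    Integrable (fun x => variance (fun y => h (x, y)) ν) μ := by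
  have h1 : Integrable (fun x => ∫ y, h (x, y) ^ 2 ∂ν) μ := hL.integrable_sq.integral_prod_left
  have h2 := (mean_memLp hL).integrable_sq
  refine (h1.sub h2).congr ?_
  filter_upwards [sections_memLp hL] with x hx
  rw [variance_eq_sub hx]
  simp [Pi.pow_apply]

lemma variance_prod_decomp {h : α × β → ℝ} (hL : MemLp h 2 (μ.prod ν)) :
    variance h (μ.prod ν)
      = variance (fun x => ∫ y, h (x, y) ∂ν) μ
        + ∫ x, variance (fun y => h (x, y)) ν ∂μ := by
  have hI : Integrable h (μ.prod ν) := hL.integrable one_le_two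
  have hsq : Integrable (fun p => h p ^ 2) (μ.prod ν) := hL.integrable_sq
  have h1 : Integrable (fun x => ∫ y, h (x, y) ^ 2 ∂ν) μ := hsq.integral_prod_left
  have hm := mean_memLp hL
  have h2 := hm.integrable_sq
  have e1 : ∫ x, variance (fun y => h (x, y)) ν ∂μ
      = (∫ p, h p ^ 2 ∂(μ.prod ν)) - ∫ x, (∫ y, h (x, y) ∂ν) ^ 2 ∂μ := by
    rw [integral_prod _ hsq, ← integral_sub h1 h2]
    apply integral_congr_ae
    filter_upwards [sections_memLp hL] with x hx
    rw [variance_eq_sub hx]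
    simp [Pi.pow_apply]
  have e2 : ∫ p, h p ∂(μ.prod ν) = ∫ x, ∫ y, h (x, y) ∂ν ∂μ := integral_prod _ hI
  rw [variance_eq_sub hL, variance_eq_sub hm, e1]
  simp only [Pi.pow_apply]
  rw [e2]
  ring

end Aux

theorem difference_estimator_unbiased_and_variance_decomposition
    {Ω₁ Ω₂ Ω₃ : Type*} [MeasurableSpace Ω₁] [MeasurableSpace Ω₂] [MeasurableSpace Ω₃]
    (μ : Measure Ω₁) (ν : Measure Ω₂) (ρ : Measure Ω₃)
    [IsProbabilityMeasure μ] [IsProbabilityMeasure ν] [IsProbabilityMeasure ρ]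
    (f : Ω₁ × Ω₂ × Ω₃ → ℝ) (hf : MemLp f 2 (μ.prod (ν.prod ρ)))
    (g : Ω₁ × Ω₂ → ℝ) (hg : MemLp g 2 (μ.prod ν))
    (F : Ω₁ × Ω₂ × Ω₃ → ℝ)
    (hF : ∀ x y z, F (x, y, z) = f (x, y, z) - g (x, y) + ∫ y', g (x, y') ∂ν) :
    (∫ p, F p ∂(μ.prod (ν.prod ρ))) = (∫ p, f p ∂(μ.prod (ν.prod ρ)))
      ∧ variance F (μ.prod (ν.prod ρ))
        = variance (fun x => ∫ y, ∫ z, f (x, y, z) ∂ρ ∂ν) μ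
          + (∫ x, variance (fun y => (∫ z, f (x, y, z) ∂ρ) - g (x, y)) ν ∂μ)
          + (∫ x, ∫ y, variance (fun z => f (x, y, z)) ρ ∂ν ∂μ) := by
  have hπ : MeasurePreserving (fun p : Ω₁ × Ω₂ × Ω₃ => (p.1, p.2.1))
      (μ.prod (ν.prod ρ)) (μ.prod ν) :=
    (MeasurePreserving.id μ).prod (⟨measurable_fst, Measure.fst_prod⟩ :
      MeasurePreserving (Prod.fst : Ω₂ × Ω₃ → Ω₂) (ν.prod ρ) ν)
  have hfst : MeasurePreserving (Prod.fst : Ω₁ × (Ω₂ × Ω₃) → Ω₁) (μ.prod (ν.prod ρ)) μ :=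
    ⟨measurable_fst, Measure.fst_prod⟩
  have hc : MemLp (fun x => ∫ y, g (x, y) ∂ν) 2 μ := mean_memLp hg
  have hgπ : MemLp (fun p : Ω₁ × Ω₂ × Ω₃ => g (p.1, p.2.1)) 2 (μ.prod (ν.prod ρ)) :=
    hg.comp_measurePreserving hπ
  have hcπ : MemLp (fun p : Ω₁ × Ω₂ × Ω₃ => ∫ y, g (p.1, y) ∂ν) 2 (μ.prod (ν.prod ρ)) :=
    hc.comp_measurePreserving hfst
  have hFeq : F = fun p : Ω₁ × Ω₂ × Ω₃ => f p - g (p.1, p.2.1) + ∫ y', g (p.1, y') ∂ν := by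
    funext p
    exact hF p.1 p.2.1 p.2.2
  have hFL : MemLp F 2 (μ.prod (ν.prod ρ)) := by
    rw [hFeq]; exact (hf.sub hgπ).add hcπ
  have hfI := hf.integrable one_le_two
  have hgπI := hgπ.integrable one_le_two
  have hcπI := hcπ.integrable one_le_two
  have hgI := hg.integrable one_le_two
  -- Part (i)
  have part1 : (∫ p, F p ∂(μ.prod (ν.prod ρ))) = ∫ p, f p ∂(μ.prod (ν.prod ρ)) := by
    have e1 : ∫ q, g q ∂(μ.prod ν) = ∫ p, g (p.1, p.2.1) ∂(μ.prod (ν.prod ρ)) := by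
      rw [← hπ.map_eq, integral_map hπ.measurable.aemeasurable (hπ.map_eq.symm ▸ hg.1)]
    have e2 : ∫ p : Ω₁ × Ω₂ × Ω₃, ∫ y, g (p.1, y) ∂ν ∂(μ.prod (ν.prod ρ))
        = ∫ x, ∫ y, g (x, y) ∂ν ∂μ := by
      have h5 := integral_map (φ := Prod.fst) hfst.measurable.aemeasurable
        (hfst.map_eq.symm ▸ hc.1)
      rw [hfst.map_eq] at h5
      exact h5.symm
    have hsub : Integrable (fun p : Ω₁ × Ω₂ × Ω₃ => f p - g (p.1, p.2.1))
        (μ.prod (ν.prod ρ)) := hfI.sub hgπI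
    rw [hFeq, integral_add hsub hcπI, integral_sub hfI hgπI, ← e1, e2,
      integral_prod _ hgI]
    ring
  refine ⟨part1, ?_⟩
  -- auxiliary objects for part (ii)
  have hf' : MemLp (fun q : (Ω₁ × Ω₂) × Ω₃ => f (q.1.1, q.1.2, q.2)) 2 ((μ.prod ν).prod ρ) :=
    hf.comp_measurePreserving (measurePreserving_prodAssoc μ ν ρ)
  have hH : MemLp (fun q : Ω₁ × Ω₂ => (∫ z, f (q.1, q.2, z) ∂ρ) - g q) 2 (μ.prod ν) :=
    (mean_memLp hf').sub hg
  have hA : Integrable (fun x => variance (fun y => (∫ z, f (x, y, z) ∂ρ) - g (x, y)) ν) μ := by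
    have h0 := variance_sections_integrable hH
    simpa using h0
  have hV : Integrable (fun q : Ω₁ × Ω₂ => variance (fun z => f (q.1, q.2, z)) ρ) (μ.prod ν) := by
    have h0 := variance_sections_integrable hf'
    simpa using h0
  have hB : Integrable (fun x => ∫ y, variance (fun z => f (x, y, z)) ρ ∂ν) μ :=
    hV.integral_prod_left
  have hsecF := sections_memLp hFL
  have hsecf : ∀ᵐ x ∂μ, Integrable (fun w => f (x, w)) (ν.prod ρ) := hfI.prod_right_ae
  have hsecg : ∀ᵐ x ∂μ, Integrable (fun y => g (x, y)) ν := hgI.prod_right_ae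
  have hsecf2 : ∀ᵐ x ∂μ, ∀ᵐ y ∂ν, MemLp (fun z => f (x, y, z)) 2 ρ := by
    have h0 := Measure.ae_ae_of_ae_prod (sections_memLp hf')
    filter_upwards [h0] with x hx
    filter_upwards [hx] with y hy
    simpa using hy
  have hHsec : ∀ᵐ x ∂μ, MemLp (fun y => (∫ z, f (x, y, z) ∂ρ) - g (x, y)) 2 ν := by
    have h0 := sections_memLp hH
    filter_upwards [h0] with x hx
    simpa using hx
  -- the outer decomposition
  have outer := variance_prod_decomp hFL
  -- the mean over the last two coordinates
  have hMeq : (fun x => ∫ w, F (x, w) ∂(ν.prod ρ)) =ᵐ[μ]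
      fun x => ∫ y, ∫ z, f (x, y, z) ∂ρ ∂ν := by
    filter_upwards [hsecf, hsecg] with x h1 h2
    have hfst2 : MeasurePreserving (Prod.fst : Ω₂ × Ω₃ → Ω₂) (ν.prod ρ) ν :=
      ⟨measurable_fst, Measure.fst_prod⟩
    have h3 : Integrable (fun w : Ω₂ × Ω₃ => g (x, w.1)) (ν.prod ρ) :=
      (hfst2.integrable_comp h2.1).2 h2
    have e0 : ∫ w, F (x, w) ∂(ν.prod ρ)
        = ∫ w : Ω₂ × Ω₃, (f (x, w) - g (x, w.1) + ∫ y', g (x, y') ∂ν) ∂(ν.prod ρ) := by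
      apply integral_congr_ae
      apply ae_of_all
      rintro ⟨y, z⟩
      exact hF x y z
    have hsub : Integrable (fun w : Ω₂ × Ω₃ => f (x, w) - g (x, w.1)) (ν.prod ρ) :=
      h1.sub h3
    rw [e0, integral_add hsub (integrable_const _), integral_sub h1 h3, integral_const,
      integral_prod _ h1]
    have e4 : ∫ w : Ω₂ × Ω₃, g (x, w.1) ∂(ν.prod ρ) = ∫ y, g (x, y) ∂ν := by
      have h5 := integral_map (φ := Prod.fst) hfst2.measurable.aemeasurable
        (hfst2.map_eq.symm ▸ h2.1)
      rw [hfst2.map_eq] at h5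
      exact h5.symm
    rw [e4]
    simp
  -- the inner decomposition
  have hInner : (fun x => variance (fun w => F (x, w)) (ν.prod ρ)) =ᵐ[μ]
      fun x => variance (fun y => (∫ z, f (x, y, z) ∂ρ) - g (x, y)) ν
        + ∫ y, variance (fun z => f (x, y, z)) ρ ∂ν := by
    filter_upwards [hsecF, hsecf2, hHsec] with x hx1 hx2 hx3
    rw [variance_prod_decomp hx1]
    congr 1
    · have e : (fun y => ∫ z, F (x, y, z) ∂ρ) =ᵐ[ν]
          fun y => ((∫ z, f (x, y, z) ∂ρ) - g (x, y)) + ∫ y', g (x, y') ∂ν := by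
        filter_upwards [hx2] with y hy
        have hyI := hy.integrable one_le_two
        have e5 : ∫ z, F (x, y, z) ∂ρ
            = ∫ z, (f (x, y, z) - g (x, y) + ∫ y', g (x, y') ∂ν) ∂ρ := by
          apply integral_congr_ae
          exact ae_of_all _ fun z => hF x y z
        have hsub2 : Integrable (fun z => f (x, y, z) - g (x, y)) ρ :=
          hyI.sub (integrable_const _)
        rw [e5, integral_add hsub2 (integrable_const _),
          integral_sub hyI (integrable_const _), integral_const]
        simp
      calc variance (fun y => ∫ z, F (x, y, z) ∂ρ) ν
          = variance (fun y => ((∫ z, f (x, y, z) ∂ρ) - g (x, y)) + ∫ y', g (x, y') ∂ν) ν :=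
            variance_congr' e
        _ = variance (fun y => (∫ z, f (x, y, z) ∂ρ) - g (x, y)) ν :=
            variance_add_const' (hx3.integrable one_le_two) _
    · apply integral_congr_ae
      filter_upwards [hx2] with y hy
      have e6 : (fun z => F (x, y, z))
          = fun z => f (x, y, z) + (-(g (x, y)) + ∫ y', g (x, y') ∂ν) := by
        funext z
        rw [hF x y z]
        ring
      rw [e6, variance_add_const' (hy.integrable one_le_two) _]
  rw [outer, variance_congr' hMeq, integral_congr_ae hInner, integral_add hA hB]
  ring
end

section
/- Let (Ω₁, μ), (Ω₂, ν), (Ω₃, ρ) be probability spaces and let f : Ω₁ × Ω₂ × Ω₃ → ℝ be square-integrable with respect to μ × ν × ρ. Define g*(x,y) = ∫ f(x,y,z) dρ(z) and the difference estimator F*(x,y,z) = f(x,y,z) − g*(x,y) + ∫ g*(x,y') dν(y'). Then Var_{μ×ν×ρ}[F*] = Var_{x∼μ}[∫∫ f(x,y,z) dν(y) dρ(z)] + ∫∫ Var_{z∼ρ}[f(x,y,z)] dμ(x) dν(y), and for every square-integrable g : Ω₁ × Ω₂ → ℝ with difference estimator F_g(x,y,z) = f(x,y,z) − g(x,y) +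 ∫ g(x,y') dν(y'), we have Var_{μ×ν×ρ}[F*] ≤ Var_{μ×ν×ρ}[F_g]. -/
open MeasureTheory ProbabilityTheory
open scoped ENNReal NNReal

section Aux

variable {α β : Type*} [MeasurableSpace α] [MeasurableSpace β]

lemma memL2_mul_integrable {μ : Measure α} {A B : α → ℝ}
    (hA : MemLp A 2 μ) (hB : MemLp B 2 μ) :
    Integrable (fun x => A x * B x) μ := by
  rw [← memLp_one_iff_integrable]
  have h : (1 : ℝ≥0∞) / 1 = 1 / 2 + 1 / 2 := by
    rw [ENNReal.div_add_div_same]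
    norm_num
    rw [ENNReal.div_self (by norm_num) ENNReal.ofNat_ne_top]
  have hH : ENNReal.HolderTriple 2 2 1 := ⟨by simpa [one_div] using h.symm⟩
  convert hA.smul hB (r := 1) using 1
  funext x
  simp [mul_comm]

lemma variance_add_of_ortho {μ : Measure α} [IsProbabilityMeasure μ] {A C : α → ℝ}
    (hA : MemLp A 2 μ) (hC : MemLp C 2 μ)
    (hA0 : ∫ x, A x ∂μ = 0) (hAC : ∫ x, A x * C x ∂μ = 0) :
    variance (fun x => A x + C x) μ = (∫ x, A x ^ 2 ∂μ) + variance C μ := by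
  have hA2 : Integrable (fun x => A x ^ 2) μ := (memLp_two_iff_integrable_sq hA.1).1 hA
  have hC2 : Integrable (fun x => C x ^ 2) μ := (memLp_two_iff_integrable_sq hC.1).1 hC
  have hmul : Integrable (fun x => A x * C x) μ := memL2_mul_integrable hA hC
  have hsum : MemLp (fun x => A x + C x) 2 μ := hA.add hC
  rw [variance_eq_sub hsum, variance_eq_sub hC]
  simp only [Pi.pow_apply, Pi.add_apply]
  have h1 : ∫ x, (A x + C x) ^ 2 ∂μ
      = (∫ x, A x ^ 2 ∂μ) + (2 * (∫ x, A x * C x ∂μ) + ∫ x, C x ^ 2 ∂μ) := by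
    have e1 : ∀ x, (A x + C x) ^ 2 = A x ^ 2 + (2 * (A x * C x) + C x ^ 2) := fun x => by ring
    simp_rw [e1]
    have hmid : Integrable (fun x => 2 * (A x * C x) + C x ^ 2) μ := (hmul.const_mul 2).add hC2
    have hm2 : Integrable (fun x => 2 * (A x * C x)) μ := hmul.const_mul 2
    rw [integral_add hA2 hmid, integral_add hm2 hC2, integral_const_mul]
  have h2 : ∫ x, (A x + C x) ∂μ
      = ∫ x, C x ∂μ := by
    rw [integral_add (hA.integrable one_le_two) (hC.integrable one_le_two), hA0, zero_add]
  rw [h1, h2, hAC]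
  ring

variable {μ : Measure α} {τ : Measure β} [IsProbabilityMeasure μ] [IsProbabilityMeasure τ]

lemma slice_memL2 {F : α × β → ℝ} (hF : MemLp F 2 (μ.prod τ)) :
    ∀ᵐ a ∂μ, MemLp (fun b => F (a, b)) 2 τ := by
  have hF2 : Integrable (fun q => F q ^ 2) (μ.prod τ) := (memLp_two_iff_integrable_sq hF.1).1 hF
  filter_upwards [hF2.prod_right_ae, (hF.integrable one_le_two).prod_right_ae] with a h1a h2a
  exact (memLp_two_iff_integrable_sq h2a.1).2 h1a

lemma memL2_condMean {F : α × β → ℝ} (hF : MemLp F 2 (μ.prod τ)) :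
    MemLp (fun a => ∫ b, F (a, b) ∂τ) 2 μ := by
  have hF2 : Integrable (fun q => F q ^ 2) (μ.prod τ) := (memLp_two_iff_integrable_sq hF.1).1 hF
  have haesm : AEStronglyMeasurable (fun a => ∫ b, F (a, b) ∂τ) μ := hF.1.integral_prod_right'
  rw [memLp_two_iff_integrable_sq haesm]
  have hbound : Integrable (fun a => ∫ b, F (a, b) ^ 2 ∂τ) μ := hF2.integral_prod_left
  refine hbound.mono' ((haesm.mul haesm).congr ?_) ?_
  · filter_upwards with a
    exact (pow_two _).symm
  · filter_upwards [slice_memL2 hF] with a ha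
    have h := variance_nonneg (fun b => F (a, b)) τ
    rw [variance_eq_sub ha] at h
    have h2 : (∫ b, F (a, b) ∂τ) ^ 2 ≤ ∫ b, F (a, b) ^ 2 ∂τ := by
      have := sub_nonneg.1 h
      simpa [Pi.pow_apply] using this
    calc ‖(∫ b, F (a, b) ∂τ) ^ 2‖ = (∫ b, F (a, b) ∂τ) ^ 2 := by
          rw [Real.norm_eq_abs, abs_of_nonneg (sq_nonneg _)]
      _ ≤ _ := h2

lemma memL2_comp_fst {G : α → ℝ} (hG : MemLp G 2 μ) :
    MemLp (fun q : α × β => G q.1) 2 (μ.prod τ) := by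
  have h : MemLp G 2 (Measure.map Prod.fst (μ.prod τ)) := by
    rwa [Measure.map_fst_prod, measure_univ, one_smul]
  exact (memLp_map_measure_iff h.1 measurable_fst.aemeasurable).1 h

lemma ortho_centered {F : α × β → ℝ} (hF : MemLp F 2 (μ.prod τ))
    {C : α → ℝ} (hC : MemLp C 2 μ) :
    ∫ q, (F q - ∫ b, F (q.1, b) ∂τ) * C q.1 ∂(μ.prod τ) = 0 := by
  have hG : MemLp (fun a => ∫ b, F (a, b) ∂τ) 2 μ := memL2_condMean hF
  have hGf : MemLp (fun q : α × β => ∫ b, F (q.1, b) ∂τ) 2 (μ.prod τ) := memL2_comp_fst hG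
  have hCf : MemLp (fun q : α × β => C q.1) 2 (μ.prod τ) := memL2_comp_fst hC
  have hInt : Integrable (fun q : α × β => (F q - ∫ b, F (q.1, b) ∂τ) * C q.1) (μ.prod τ) :=
    memL2_mul_integrable (hF.sub hGf) hCf
  rw [integral_prod _ hInt]
  have h0 : ∀ᵐ a ∂μ, ∫ b, (F (a, b) - ∫ b', F (a, b') ∂τ) * C a ∂τ = 0 := by
    filter_upwards [(hF.integrable one_le_two).prod_right_ae] with a ha
    rw [integral_mul_const, integral_sub ha (integrable_const _), integral_const]
    simp
  rw [integral_congr_ae h0, integral_zero]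

lemma centered_int_zero {F : α × β → ℝ} (hF : MemLp F 2 (μ.prod τ)) :
    ∫ q, (F q - ∫ b, F (q.1, b) ∂τ) ∂(μ.prod τ) = 0 := by
  have := ortho_centered hF (memLp_const (1 : ℝ))
  simpa using this

lemma variance_map_aux {g : α → β} {ν : Measure α} {X : β → ℝ} (hg : AEMeasurable g ν)
    (hX : AEStronglyMeasurable X (Measure.map g ν)) :
    variance X (Measure.map g ν) = variance (fun a => X (g a)) ν := by
  have hc : ∫ b, X b ∂(Measure.map g ν) = ∫ a, X (g a) ∂ν := integral_map hg hX
  have haem : AEMeasurable (fun b => ‖X b - ∫ a, X (g a) ∂ν‖ₑ ^ 2)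
      (Measure.map g ν) :=
    ((hX.aemeasurable.sub aemeasurable_const).enorm).pow_const 2
  rw [variance, variance, evariance, evariance, hc, lintegral_map' haem hg]

lemma variance_comp_fst {X : α → ℝ} (hX : MemLp X 2 μ) :
    variance (fun q : α × β => X q.1) (μ.prod τ) = variance X μ := by
  have hmap : Measure.map (Prod.fst : α × β → α) (μ.prod τ) = μ := by
    rw [Measure.map_fst_prod, measure_univ, one_smul]
  have h2 : AEStronglyMeasurable X (Measure.map (Prod.fst : α × β → α) (μ.prod τ)) := by
    rw [hmap]; exact hX.1
  have := variance_map_aux measurable_fst.aemeasurable h2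
  rw [hmap] at this
  exact this.symm

end Aux

theorem optimal_control_variate_is_conditional_expectation
    {Ω₁ Ω₂ Ω₃ : Type*} [MeasurableSpace Ω₁] [MeasurableSpace Ω₂] [MeasurableSpace Ω₃]
    (μ : Measure Ω₁) (ν : Measure Ω₂) (ρ : Measure Ω₃)
    [IsProbabilityMeasure μ] [IsProbabilityMeasure ν] [IsProbabilityMeasure ρ]
    (f : Ω₁ × Ω₂ × Ω₃ → ℝ) (hf : MemLp f 2 (μ.prod (ν.prod ρ)))
    (Fstar : Ω₁ × Ω₂ × Ω₃ → ℝ)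
    (hFstar : ∀ x y z, Fstar (x, y, z)
      = f (x, y, z) - (∫ z', f (x, y, z') ∂ρ) + ∫ y', ∫ z', f (x, y', z') ∂ρ ∂ν) :
    variance Fstar (μ.prod (ν.prod ρ))
        = variance (fun x => ∫ y, ∫ z, f (x, y, z) ∂ρ ∂ν) μ
          + (∫ x, ∫ y, variance (fun z => f (x, y, z)) ρ ∂ν ∂μ)
      ∧ ∀ (g : Ω₁ × Ω₂ → ℝ), MemLp g 2 (μ.prod ν) →
        ∀ (Fg : Ω₁ × Ω₂ × Ω₃ → ℝ),
          (∀ x y z, Fg (x, y, z) = f (x, y, z) - g (x, y) + ∫ y', g (x, y') ∂ν) →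
          variance Fstar (μ.prod (ν.prod ρ)) ≤ variance Fg (μ.prod (ν.prod ρ)) := by
  have hassoc : MeasurePreserving (MeasurableEquiv.prodAssoc : (Ω₁ × Ω₂) × Ω₃ ≃ᵐ Ω₁ × Ω₂ × Ω₃)
      ((μ.prod ν).prod ρ) (μ.prod (ν.prod ρ)) := measurePreserving_prodAssoc μ ν ρ
  set π : Measure (Ω₁ × Ω₂ × Ω₃) := μ.prod (ν.prod ρ) with hπ_def
  set σ : Measure (Ω₁ × Ω₂) := μ.prod ν with hσ_def
  set π' : Measure ((Ω₁ × Ω₂) × Ω₃) := (μ.prod ν).prod ρ with hπ'_def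
  -- transported f
  set f' : (Ω₁ × Ω₂) × Ω₃ → ℝ := fun q => f (q.1.1, q.1.2, q.2) with hf'_def
  have hf' : MemLp f' 2 π' := by
    have h1 : MemLp f 2 (Measure.map (⇑MeasurableEquiv.prodAssoc) π') := by
      rwa [hassoc.map_eq]
    exact (MeasurableEquiv.prodAssoc.memLp_map_measure_iff).1 h1
  -- conditional means
  set G : Ω₁ × Ω₂ → ℝ := fun a => ∫ z, f (a.1, a.2, z) ∂ρ with hG_def
  have hG : MemLp G 2 σ := memL2_condMean hf'
  set h : Ω₁ → ℝ := fun x => ∫ y, ∫ z, f (x, y, z) ∂ρ ∂ν with hh_def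
  have hh : MemLp h 2 μ := memL2_condMean hG
  have hh1 : MemLp (fun a : Ω₁ × Ω₂ => h a.1) 2 σ := memL2_comp_fst hh
  have hh2 : MemLp (fun q : (Ω₁ × Ω₂) × Ω₃ => h q.1.1) 2 π' := memL2_comp_fst hh1
  -- centered part
  set A' : (Ω₁ × Ω₂) × Ω₃ → ℝ := fun q => f' q - G q.1 with hA'_def
  have hA' : MemLp A' 2 π' := hf'.sub (memL2_comp_fst hG)
  have hA'0 : ∫ q, A' q ∂π' = 0 := centered_int_zero hf'
  have horth : ∀ C : Ω₁ × Ω₂ → ℝ, MemLp C 2 σ → ∫ q, A' q * C q.1 ∂π' = 0 :=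
    fun C hC => ortho_centered hf' hC
  -- variance transport
  have hvar_conv : ∀ X : Ω₁ × Ω₂ × Ω₃ → ℝ, AEStronglyMeasurable X π →
      variance X π = variance (fun q : (Ω₁ × Ω₂) × Ω₃ => X (q.1.1, q.1.2, q.2)) π' := by
    intro X hX
    have h1 : AEStronglyMeasurable X (Measure.map (⇑MeasurableEquiv.prodAssoc) π') := by
      rwa [hassoc.map_eq]
    have h2 := variance_map_aux MeasurableEquiv.prodAssoc.measurable.aemeasurable h1
    rw [hassoc.map_eq] at h2
    exact h2
  -- Fstar transported
  have hFscomp : (fun q : (Ω₁ × Ω₂) × Ω₃ => Fstar (q.1.1, q.1.2, q.2))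
      = fun q => A' q + h q.1.1 := by
    funext q
    exact hFstar q.1.1 q.1.2 q.2
  have hFsL2' : MemLp (fun q : (Ω₁ × Ω₂) × Ω₃ => Fstar (q.1.1, q.1.2, q.2)) 2 π' := by
    rw [hFscomp]; exact hA'.add hh2
  have hFs_aesm : AEStronglyMeasurable Fstar π := by
    rw [← hassoc.map_eq]
    exact (MeasurableEquiv.prodAssoc.measurableEmbedding.aestronglyMeasurable_map_iff).2 hFsL2'.1
  -- first identity
  have hA'sq : Integrable (fun q => A' q ^ 2) π' := (memLp_two_iff_integrable_sq hA'.1).1 hA'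
  have hae : ∀ᵐ a ∂σ, ∫ z, A' (a, z) ^ 2 ∂ρ = variance (fun z => f (a.1, a.2, z)) ρ := by
    filter_upwards [slice_memL2 hf'] with a ha
    have h1 : Integrable (fun z => f (a.1, a.2, z)) ρ := ha.integrable one_le_two
    have h2 : Integrable (fun z => f (a.1, a.2, z) ^ 2) ρ :=
      (memLp_two_iff_integrable_sq ha.1).1 ha
    have hv : variance (fun z => f (a.1, a.2, z)) ρ
        = (∫ z, f (a.1, a.2, z) ^ 2 ∂ρ) - G a ^ 2 := by
      rw [variance_eq_sub ha]
      simp only [Pi.pow_apply]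
      rfl
    rw [hv]
    have e1 : ∀ z, (f (a.1, a.2, z) - G a) ^ 2
        = f (a.1, a.2, z) ^ 2 - 2 * G a * f (a.1, a.2, z) + G a ^ 2 := fun z => by ring
    calc ∫ z, A' (a, z) ^ 2 ∂ρ
        = ∫ z, (f (a.1, a.2, z) ^ 2 - 2 * G a * f (a.1, a.2, z) + G a ^ 2) ∂ρ := by
          simp_rw [hA'_def, hf'_def]; exact integral_congr_ae (ae_of_all _ e1)
      _ = (∫ z, f (a.1, a.2, z) ^ 2 ∂ρ) - G a ^ 2 := by
          have hsub : Integrable (fun z => f (a.1, a.2, z) ^ 2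
              - 2 * G a * f (a.1, a.2, z)) ρ := h2.sub (h1.const_mul _)
          rw [integral_add hsub (integrable_const _),
            integral_sub h2 (h1.const_mul _), integral_const, integral_const_mul]
          have : ∫ z, f (a.1, a.2, z) ∂ρ = G a := rfl
          rw [this]
          simp only [probReal_univ, one_smul]
          ring
  have hVint : Integrable (fun a : Ω₁ × Ω₂ => variance (fun z => f (a.1, a.2, z)) ρ) σ :=
    (hA'sq.integral_prod_left).congr hae
  have key1 : variance Fstar π = (∫ q, A' q ^ 2 ∂π') + variance h μ := by
    rw [hvar_conv Fstar hFs_aesm, hFscomp]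
    have := variance_add_of_ortho hA' hh2 hA'0 (horth (fun a => h a.1) hh1)
    rw [this, variance_comp_fst hh1, variance_comp_fst hh]
  have key2 : (∫ q, A' q ^ 2 ∂π') = ∫ x, ∫ y, variance (fun z => f (x, y, z)) ρ ∂ν ∂μ := by
    rw [integral_prod _ hA'sq]
    rw [integral_congr_ae hae]
    exact integral_prod _ hVint
  constructor
  · rw [key1, key2, add_comm]
  · intro g hg Fg hFg
    set r : Ω₁ → ℝ := fun x => ∫ y', g (x, y') ∂ν with hr_def
    have hr : MemLp r 2 μ := memL2_condMean hg
    set d : Ω₁ × Ω₂ → ℝ := fun a => G a - g a with hd_def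
    have hd : MemLp d 2 σ := hG.sub hg
    set D : Ω₁ × Ω₂ → ℝ := fun a => d a - (h a.1 - r a.1) with hD_def
    have hD : MemLp D 2 σ := hd.sub ((memL2_comp_fst hh).sub (memL2_comp_fst hr))
    have hDae : (fun a : Ω₁ × Ω₂ => d a - ∫ y', d (a.1, y') ∂ν) =ᵐ[σ] D := by
      have h1 : ∀ᵐ x ∂μ, Integrable (fun y => G (x, y)) ν ∧ Integrable (fun y => g (x, y)) ν := by
        filter_upwards [(hG.integrable one_le_two).prod_right_ae,
          (hg.integrable one_le_two).prod_right_ae] with x hx1 hx2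
        exact ⟨hx1, hx2⟩
      have h2 : ∀ᵐ a ∂σ, Integrable (fun y => G (a.1, y)) ν ∧ Integrable (fun y => g (a.1, y)) ν := by
        exact ae_of_ae_map (f := (Prod.fst : Ω₁ × Ω₂ → Ω₁))
          (p := fun x => Integrable (fun y => G (x, y)) ν ∧ Integrable (fun y => g (x, y)) ν)
          (measurable_fst.aemeasurable (μ := σ))
          (by rwa [hσ_def, Measure.map_fst_prod, measure_univ, one_smul])
      filter_upwards [h2] with a ha
      have : ∫ y', d (a.1, y') ∂ν = h a.1 - r a.1 := by
        rw [hd_def]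
        simp only
        rw [integral_sub ha.1 ha.2]
      simp only [hD_def, this]
    have hD0 : ∫ a, D a ∂σ = 0 := by
      rw [← integral_congr_ae hDae]
      exact centered_int_zero hd
    have hDorthh : ∫ a, D a * h a.1 ∂σ = 0 := by
      have := ortho_centered hd hh
      rw [← this]
      apply integral_congr_ae
      filter_upwards [hDae] with a ha
      rw [ha]
    -- Fg transported
    have hFgcomp : (fun q : (Ω₁ × Ω₂) × Ω₃ => Fg (q.1.1, q.1.2, q.2))
        = fun q => A' q + (D q.1 + h q.1.1) := by
      funext q
      have h1 := hFg q.1.1 q.1.2 q.2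
      have h2 : A' q + (D q.1 + h q.1.1)
          = f (q.1.1, q.1.2, q.2) - g q.1 + r q.1.1 := by
        simp only [hA'_def, hD_def, hd_def, hf'_def]
        ring
      rw [h1, h2]
    have hDh : MemLp (fun a : Ω₁ × Ω₂ => D a + h a.1) 2 σ := hD.add hh1
    have hFgL2' : MemLp (fun q : (Ω₁ × Ω₂) × Ω₃ => Fg (q.1.1, q.1.2, q.2)) 2 π' := by
      rw [hFgcomp]; exact hA'.add (memL2_comp_fst hDh)
    have hFg_aesm : AEStronglyMeasurable Fg π := by
      rw [← hassoc.map_eq]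
      exact (MeasurableEquiv.prodAssoc.measurableEmbedding.aestronglyMeasurable_map_iff).2 hFgL2'.1
    have hDsq : Integrable (fun a => D a ^ 2) σ := (memLp_two_iff_integrable_sq hD.1).1 hD
    have key3 : variance Fg π
        = (∫ q, A' q ^ 2 ∂π') + ((∫ a, D a ^ 2 ∂σ) + variance h μ) := by
      rw [hvar_conv Fg hFg_aesm, hFgcomp]
      have s1 := variance_add_of_ortho hA' (memL2_comp_fst hDh) hA'0
        (horth (fun a => D a + h a.1) hDh)
      rw [s1, variance_comp_fst hDh]
      have s2 := variance_add_of_ortho hD hh1 hD0 hDorthh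
      rw [s2, variance_comp_fst hh]
    rw [key1, key3]
    have : 0 ≤ ∫ a, D a ^ 2 ∂σ := integral_nonneg fun a => sq_nonneg _
    linarith
end

section
/- Let μ be a probability measure on a measurable space α, κ a Markov kernel from α to a measurable space β, f : α × β → ℝ square-integrable with respect to μ ⊗ κ, and g : α × β → ℝ square-integrable with respect to μ ⊗ κ. Define the difference estimator F(a,b) = f(a,b) − g(a,b) + ∫ g(a,b') d(κ a)(b'). Then ∫ F d(μ ⊗ κ) = ∫ f d(μ ⊗ κ), and Var_{μ⊗κ}[F] = Var_{a∼μ}[∫ f(a,b) d(κ a)(b)] + ∫ Var_{b∼κ(a)}[f(a,b) − g(a,b)] dμ(a). -/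
open MeasureTheory ProbabilityTheory

section helpers
variable {α β : Type*} [MeasurableSpace α] [MeasurableSpace β]
  {μ : Measure α} {κ : Kernel α β}

lemma aux_aesm_integral [SFinite μ] [IsSFiniteKernel κ] {g : α × β → ℝ}
    (hg : AEStronglyMeasurable g (μ ⊗ₘ κ)) :
    AEStronglyMeasurable (fun a => ∫ b, g (a, b) ∂(κ a)) μ := by
  rw [Measure.compProd] at hg
  exact hg.integral_kernel_compProd

lemma aux_integrable_integral [SFinite μ] [IsSFiniteKernel κ] {g : α × β → ℝ}
    (hg : Integrable g (μ ⊗ₘ κ)) :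
    Integrable (fun a => ∫ b, g (a, b) ∂(κ a)) μ := by
  rw [Measure.compProd] at hg
  exact hg.integral_compProd

lemma aux_aesm_slice [SFinite μ] [IsSFiniteKernel κ] {g : α × β → ℝ}
    (hg : AEStronglyMeasurable g (μ ⊗ₘ κ)) :
    ∀ᵐ a ∂μ, AEStronglyMeasurable (fun b => g (a, b)) (κ a) := by
  rw [Measure.compProd] at hg
  exact hg.compProd_mk_left

lemma aux_memLp_slice [SFinite μ] [IsSFiniteKernel κ] {f : α × β → ℝ}
    (hf : MemLp f 2 (μ ⊗ₘ κ)) :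
    ∀ᵐ a ∂μ, MemLp (fun b => f (a, b)) 2 (κ a) := by
  have hsq : Integrable (fun p => f p ^ 2) (μ ⊗ₘ κ) := hf.integrable_sq
  have h1 := ((Measure.integrable_compProd_iff hsq.aestronglyMeasurable).mp hsq).1
  have h2 := aux_aesm_slice hf.aestronglyMeasurable
  filter_upwards [h1, h2] with a ha1 ha2
  exact (memLp_two_iff_integrable_sq ha2).2 ha1

lemma aux_memLp_integral [IsProbabilityMeasure μ] [IsMarkovKernel κ] {g : α × β → ℝ}
    (hg : MemLp g 2 (μ ⊗ₘ κ)) :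
    MemLp (fun a => ∫ b, g (a, b) ∂(κ a)) 2 μ := by
  have A : AEStronglyMeasurable (fun a => ∫ b, g (a, b) ∂(κ a)) μ :=
    aux_aesm_integral hg.aestronglyMeasurable
  have I : Integrable (fun a => ∫ b, g (a, b) ^ 2 ∂(κ a)) μ :=
    aux_integrable_integral hg.integrable_sq
  have hs := aux_memLp_slice hg
  have bound : ∀ᵐ a ∂μ, ‖(∫ b, g (a, b) ∂(κ a)) ^ 2‖ ≤ ∫ b, g (a, b) ^ 2 ∂(κ a) := by
    filter_upwards [hs] with a ha
    have h0 : 0 ≤ variance (fun b => g (a, b)) (κ a) := variance_nonneg _ _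
    rw [variance_eq_sub ha] at h0
    have h0' : (∫ b, ((fun b => g (a,b)) ^ 2) b ∂(κ a)) = ∫ b, g (a, b) ^ 2 ∂(κ a) := by
      simp [Pi.pow_apply]
    rw [h0'] at h0
    rw [Real.norm_eq_abs, abs_of_nonneg (sq_nonneg _)]
    linarith
  have Isq : Integrable (fun a => (∫ b, g (a, b) ∂(κ a)) ^ 2) μ := by
    refine Integrable.mono' I ?_ bound
    simp only [sq]; exact A.mul A
  exact (memLp_two_iff_integrable_sq A).2 Isq

end helpers

theorem difference_estimator_compProd
    {α β : Type*} [MeasurableSpace α] [MeasurableSpace β]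
    (μ : Measure α) [IsProbabilityMeasure μ]
    (κ : Kernel α β) [IsMarkovKernel κ]
    (f : α × β → ℝ) (hf : MemLp f 2 (μ ⊗ₘ κ))
    (g : α × β → ℝ) (hg : MemLp g 2 (μ ⊗ₘ κ))
    (F : α × β → ℝ)
    (hF : ∀ a b, F (a, b) = f (a, b) - g (a, b) + ∫ b', g (a, b') ∂(κ a)) :
    (∫ p, F p ∂(μ ⊗ₘ κ)) = (∫ p, f p ∂(μ ⊗ₘ κ))
      ∧ variance F (μ ⊗ₘ κ)
        = variance (fun a => ∫ b, f (a, b) ∂(κ a)) μ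
          + ∫ a, variance (fun b => f (a, b) - g (a, b)) (κ a) ∂μ := by
  set h : α × β → ℝ := fun p => f p - g p with hh_def
  have hh : MemLp h 2 (μ ⊗ₘ κ) := hf.sub hg
  set Gm : α → ℝ := fun a => ∫ b, g (a, b) ∂(κ a) with hGm_def
  set m : α → ℝ := fun a => ∫ b, f (a, b) ∂(κ a) with hm_def
  have hFeq : F = fun p => h p + Gm p.1 := by
    funext p
    simpa using hF p.1 p.2
  -- L² facts
  have hGm2 : MemLp Gm 2 μ := aux_memLp_integral hg
  have hm2 : MemLp m 2 μ := aux_memLp_integral hf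
  have hmap : (μ ⊗ₘ κ).map Prod.fst = μ := Measure.fst_compProd μ κ
  have hGmF : MemLp (fun p : α × β => Gm p.1) 2 (μ ⊗ₘ κ) := by
    have hGm2' : MemLp Gm 2 ((μ ⊗ₘ κ).map Prod.fst) := by rwa [hmap]
    exact (memLp_map_measure_iff hGm2'.aestronglyMeasurable
      measurable_fst.aemeasurable).1 hGm2'
  have hF2 : MemLp F 2 (μ ⊗ₘ κ) := by
    rw [hFeq]; exact hh.add hGmF
  -- slice facts
  have hfs := aux_memLp_slice hf
  have hgs := aux_memLp_slice hg
  have hhs : ∀ᵐ a ∂μ, MemLp (fun b => f (a, b) - g (a, b)) 2 (κ a) := by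
    filter_upwards [hfs, hgs] with a ha hb using ha.sub hb
  -- a.e. slice integral of F
  have hintF : ∀ᵐ a ∂μ, ∫ b, F (a, b) ∂(κ a) = m a := by
    filter_upwards [hfs, hgs] with a ha hb
    have hia : Integrable (fun b => f (a, b)) (κ a) := ha.integrable one_le_two
    have hib : Integrable (fun b => g (a, b)) (κ a) := hb.integrable one_le_two
    have hifg : Integrable (fun b => f (a, b) - g (a, b)) (κ a) := hia.sub hib
    have e : (fun b => F (a, b)) = fun b => (f (a, b) - g (a, b)) + Gm a := by
      funext b; exact hF a b
    rw [e, integral_add hifg (integrable_const _), integral_sub hia hib, integral_const]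
    simp only [measure_univ, ENNReal.toReal_one, probReal_univ, one_smul, smul_eq_mul, mul_one, hm_def, hGm_def]
    ring
  -- ∫ F = ∫ m
  have EF : ∫ p, F p ∂(μ ⊗ₘ κ) = ∫ a, m a ∂μ := by
    rw [Measure.integral_compProd (hF2.integrable one_le_two)]
    exact integral_congr_ae hintF
  have Ef : ∫ p, f p ∂(μ ⊗ₘ κ) = ∫ a, m a ∂μ :=
    Measure.integral_compProd (hf.integrable one_le_two)
  refine ⟨EF.trans Ef.symm, ?_⟩
  -- key slicewise identity for F²
  have hkey : ∀ᵐ a ∂μ, ∫ b, F (a, b) ^ 2 ∂(κ a)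
      = variance (fun b => f (a, b) - g (a, b)) (κ a) + m a ^ 2 := by
    filter_upwards [hfs, hgs, hhs] with a hfa hga hha
    have hint : Integrable (fun b => f (a, b) - g (a, b)) (κ a) := hha.integrable one_le_two
    have e1 : (fun b => F (a, b) ^ 2)
        = fun b => (f (a, b) - g (a, b)) ^ 2 + (2 * Gm a) * (f (a, b) - g (a, b)) + Gm a ^ 2 := by
      funext b; rw [hF a b]; ring
    have hma : m a = (∫ b, (f (a, b) - g (a, b)) ∂(κ a)) + Gm a := by
      rw [integral_sub (hfa.integrable one_le_two) (hga.integrable one_le_two)]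
      simp [hm_def, hGm_def]
    have hvar : variance (fun b => f (a, b) - g (a, b)) (κ a)
        = (∫ b, (f (a, b) - g (a, b)) ^ 2 ∂(κ a))
          - (∫ b, (f (a, b) - g (a, b)) ∂(κ a)) ^ 2 := by
      rw [variance_eq_sub hha]; congr 1
    have hsq : Integrable (fun b => (f (a, b) - g (a, b)) ^ 2) (κ a) := hha.integrable_sq
    have hlin : Integrable (fun b => 2 * Gm a * (f (a, b) - g (a, b))) (κ a) := hint.const_mul _
    have hsum : Integrable
        (fun b => (f (a, b) - g (a, b)) ^ 2 + 2 * Gm a * (f (a, b) - g (a, b))) (κ a) :=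
      hsq.add hlin
    rw [e1, integral_add hsum (integrable_const _),
      integral_add hsq hlin, integral_const, integral_const_mul]
    simp only [measure_univ, ENNReal.toReal_one, probReal_univ, smul_eq_mul, one_mul, mul_one]
    rw [hvar, hma]
    ring
  -- integrability of the variance term
  have hHm2 : MemLp (fun a => ∫ b, (f (a, b) - g (a, b)) ∂(κ a)) 2 μ :=
    aux_memLp_integral hh
  have Ih2 : Integrable (fun a => ∫ b, (f (a, b) - g (a, b)) ^ 2 ∂(κ a)) μ :=
    aux_integrable_integral hh.integrable_sq
  have hVar_eq : (fun a => variance (fun b => f (a, b) - g (a, b)) (κ a))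
      =ᵐ[μ] fun a => (∫ b, (f (a, b) - g (a, b)) ^ 2 ∂(κ a))
        - (∫ b, (f (a, b) - g (a, b)) ∂(κ a)) ^ 2 := by
    filter_upwards [hhs] with a hha
    rw [variance_eq_sub hha]; congr 1
  have hVarInt : Integrable (fun a => variance (fun b => f (a, b) - g (a, b)) (κ a)) μ :=
    (Ih2.sub hHm2.integrable_sq).congr hVar_eq.symm
  -- ∫ F²
  have EFsq : ∫ p, F p ^ 2 ∂(μ ⊗ₘ κ)
      = (∫ a, variance (fun b => f (a, b) - g (a, b)) (κ a) ∂μ) + ∫ a, m a ^ 2 ∂μ := by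
    rw [Measure.integral_compProd hF2.integrable_sq, integral_congr_ae hkey,
      integral_add hVarInt hm2.integrable_sq]
  -- assemble
  have hVF : variance F (μ ⊗ₘ κ) = (∫ p, F p ^ 2 ∂(μ ⊗ₘ κ)) - (∫ p, F p ∂(μ ⊗ₘ κ)) ^ 2 := by
    rw [variance_eq_sub hF2]; congr 1
  have hVm : variance m μ = (∫ a, m a ^ 2 ∂μ) - (∫ a, m a ∂μ) ^ 2 := by
    rw [variance_eq_sub hm2]; congr 1
  rw [hVF, EFsq, EF, hVm]
  ring
end
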